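/- Let A be an action set with partition {A^r, A^l, A^bi} such that A^bi ≠ ∅ and A^r ∪ A^l ≠ ∅. Then covariant-contravariant simulation equivalence is not finitely axiomatizable: for every finite set E of equations between open BCCSP terms that is sound for ≡_CC (i.e., for every equation l = r in E and every closed substitution σ, σ(l) ≡_CC σ(r)), there exist closed BCCSP processes p, q with p ≡_CC q such that the equation p = q is not equationally derivable from E. -/

import Mathlib

inductive Proc (A : Type) : Type
  | nil : Proc A
  | pre : A → Proc A → Proc A
  | add : Proc A → Proc A → Proc A

inductive Step {A : Type} : Proc A → A → Proc A → Prop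
  | pre (a : A) (p : Proc A) : Step (.pre a p) a p
  | addL {p : Proc A} {a : A} {p' : Proc A} (q : Proc A) :
      Step p a p' → Step (.add p q) a p'
  | addR {q : Proc A} {a : A} {q' : Proc A} (p : Proc A) :
      Step q a q' → Step (.add p q) a q'

/-- `initials p` is the set `I(p)` of actions that `p` can immediately perform. -/
def initials {A : Type} (p : Proc A) : Set A := {a | ∃ p', Step p a p'}

/-- `{Ar, Al, Abi}` is a partition of the action set `A` (cells may be empty). -/
def IsPartition {A : Type} (Ar Al Abi : Set A) : Prop :=
  (Ar ∪ Al ∪ Abi = Set.univ) ∧ Disjoint Ar Al ∧ Disjoint Ar Abi ∧ Disjoint Al Abi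

/-- Covariant-contravariant simulation w.r.t. covariant actions `Ar`,
contravariant actions `Al` and bivariant actions `Abi`. -/
def IsCCSim {A : Type} (Ar Al Abi : Set A) (S : Proc A → Proc A → Prop) : Prop :=
  ∀ p q, S p q →
    (∀ a ∈ Ar ∪ Abi, ∀ p', Step p a p' → ∃ q', Step q a q' ∧ S p' q') ∧
    (∀ a ∈ Al ∪ Abi, ∀ q', Step q a q' → ∃ p', Step p a p' ∧ S p' q')

/-- The covariant-contravariant simulation preorder `p ≲_CC q`. -/
def ccLe {A : Type} (Ar Al Abi : Set A) (p q : Proc A) : Prop :=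
  ∃ S, IsCCSim Ar Al Abi S ∧ S p q

/-- Covariant-contravariant simulation equivalence `p ≡_CC q`. -/
def ccEq {A : Type} (Ar Al Abi : Set A) (p q : Proc A) : Prop :=
  ccLe Ar Al Abi p q ∧ ccLe Ar Al Abi q p

/-- Conformance simulation. -/
def IsConfSim {A : Type} (R : Proc A → Proc A → Prop) : Prop :=
  ∀ p q, R p q →
    initials p ⊆ initials q ∧
    (∀ a q', Step q a q' → a ∈ initials p → ∃ p', Step p a p' ∧ R p' q')

/-- The conformance simulation preorder `p ≲_CS q`. -/
def csLe {A : Type} (p q : Proc A) : Prop := ∃ R, IsConfSim R ∧ R p q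

/-- Conformance simulation equivalence `p ≡_CS q`. -/
def csEq {A : Type} (p q : Proc A) : Prop := csLe p q ∧ csLe q p

/-- The conformance precongruence `p ⊑_CS q`. -/
def csPre {A : Type} (p q : Proc A) : Prop := csLe p q ∧ initials q ⊆ initials p

/-- Plain simulation. -/
def IsSim {A : Type} (S : Proc A → Proc A → Prop) : Prop :=
  ∀ p q, S p q → ∀ a p', Step p a p' → ∃ q', Step q a q' ∧ S p' q'

/-- The plain simulation preorder `p ≲_S q`. -/
def simLe {A : Type} (p q : Proc A) : Prop := ∃ S, IsSim S ∧ S p q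

/-- Ready simulation. -/
def IsRSim {A : Type} (S : Proc A → Proc A → Prop) : Prop :=
  ∀ p q, S p q → initials p = initials q ∧
    (∀ a p', Step p a p' → ∃ q', Step q a q' ∧ S p' q')

/-- The ready simulation preorder `p ≲_RS q`. -/
def rsLe {A : Type} (p q : Proc A) : Prop := ∃ S, IsRSim S ∧ S p q

/-- Ready conformance simulation: a conformance simulation that additionally
guarantees `I(q) ⊆ I(p)` for all related pairs. -/
def IsRCSim {A : Type} (R : Proc A → Proc A → Prop) : Prop :=
  IsConfSim R ∧ ∀ p q, R p q → initials q ⊆ initials p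

/-- The ready conformance simulation preorder `p ≲_RCS q`. -/
def rcsLe {A : Type} (p q : Proc A) : Prop := ∃ R, IsRCSim R ∧ R p q

/-- Open BCCSP terms (with variables indexed by `ℕ`). -/
inductive Term (A : Type) : Type
  | var : ℕ → Term A
  | nil : Term A
  | pre : A → Term A → Term A
  | add : Term A → Term A → Term A

/-- Closed substitution applied to an open term. -/
def Term.subst {A : Type} (σ : ℕ → Proc A) : Term A → Proc A
  | .var n => σ n
  | .nil => .nil
  | .pre a t => .pre a (t.subst σ)
  | .add s t => .add (s.subst σ) (t.subst σ)

/-- View a closed process as an (open) term. -/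
def Proc.toTerm {A : Type} : Proc A → Term A
  | .nil => .nil
  | .pre a p => .pre a p.toTerm
  | .add p q => .add p.toTerm q.toTerm

/-- Inequational derivability (between closed processes) from a set `E` of
inequations between open terms: the least relation containing all substitution
instances of `E` and closed under reflexivity, transitivity and the congruence
rules for prefixing and `+`. -/
inductive DerivLe {A : Type} (E : Set (Term A × Term A)) : Proc A → Proc A → Prop
  | ax (l r : Term A) (σ : ℕ → Proc A) : (l, r) ∈ E → DerivLe E (l.subst σ) (r.subst σ)
  | refl (p : Proc A) : DerivLe E p p
  | trans {p q r : Proc A} : DerivLe E p q → DerivLe E q r → DerivLe E p r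
  | pre (a : A) {p q : Proc A} : DerivLe E p q → DerivLe E (.pre a p) (.pre a q)
  | add {p q r s : Proc A} : DerivLe E p q → DerivLe E r s → DerivLe E (.add p r) (.add q s)

/-- Equational derivability (between closed processes) from a set `E` of
equations between open terms. -/
inductive DerivEq {A : Type} (E : Set (Term A × Term A)) : Proc A → Proc A → Prop
  | ax (l r : Term A) (σ : ℕ → Proc A) : (l, r) ∈ E → DerivEq E (l.subst σ) (r.subst σ)
  | refl (p : Proc A) : DerivEq E p p
  | symm {p q : Proc A} : DerivEq E p q → DerivEq E q p
  | trans {p q r : Proc A} : DerivEq E p q → DerivEq E q r → DerivEq E p r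
  | pre (a : A) {p q : Proc A} : DerivEq E p q → DerivEq E (.pre a p) (.pre a q)
  | add {p q r s : Proc A} : DerivEq E p q → DerivEq E r s → DerivEq E (.add p r) (.add q s)

/-- Substitution of (possibly open) terms for variables. -/
def Term.substT {A : Type} (σ : ℕ → Term A) : Term A → Term A
  | .var n => σ n
  | .nil => .nil
  | .pre a t => .pre a (t.substT σ)
  | .add s t => .add (s.substT σ) (t.substT σ)

/-- Equational derivability between open terms from a set `E` of equations. -/
inductive TDerivEq {A : Type} (E : Set (Term A × Term A)) : Term A → Term A → Prop
  | ax (l r : Term A) (σ : ℕ → Term A) : (l, r) ∈ E → TDerivEq E (l.substT σ) (r.substT σ)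
  | refl (t : Term A) : TDerivEq E t t
  | symm {s t : Term A} : TDerivEq E s t → TDerivEq E t s
  | trans {s t u : Term A} : TDerivEq E s t → TDerivEq E t u → TDerivEq E s u
  | pre (a : A) {s t : Term A} : TDerivEq E s t → TDerivEq E (.pre a s) (.pre a t)
  | add {s t u v : Term A} : TDerivEq E s t → TDerivEq E u v → TDerivEq E (.add s u) (.add t v)

/-- The bisimulation axioms B1–B4, as equations. -/
def BEqns (A : Type) : Set (Term A × Term A) :=
  { (.add (.var 0) (.var 1), .add (.var 1) (.var 0)),
    (.add (.add (.var 0) (.var 1)) (.var 2), .add (.var 0) (.add (.var 1) (.var 2))),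
    (.add (.var 0) (.var 0), .var 0),
    (.add (.var 0) .nil, .var 0) }

/-- The bisimulation axioms B1–B4, each used as two inequations. -/
def BIneqs (A : Type) : Set (Term A × Term A) := BEqns A ∪ Prod.swap '' BEqns A

/-! ### Auxiliary development for the proof -/

section CCAux

variable {A : Type}

theorem ccLe_stepL {Ar Al Abi : Set A} {p q p' : Proc A} {c : A}
    (h : ccLe Ar Al Abi p q) (hc : c ∈ Ar ∪ Abi) (hs : Step p c p') :
    ∃ q', Step q c q' ∧ ccLe Ar Al Abi p' q' := by
  obtain ⟨S, hS, hpq⟩ := h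
  obtain ⟨q', h1, h2⟩ := (hS p q hpq).1 c hc p' hs
  exact ⟨q', h1, S, hS, h2⟩

theorem ccLe_stepR {Ar Al Abi : Set A} {p q q' : Proc A} {c : A}
    (h : ccLe Ar Al Abi p q) (hc : c ∈ Al ∪ Abi) (hs : Step q c q') :
    ∃ p', Step p c p' ∧ ccLe Ar Al Abi p' q' := by
  obtain ⟨S, hS, hpq⟩ := h
  obtain ⟨p', h1, h2⟩ := (hS p q hpq).2 c hc q' hs
  exact ⟨p', h1, S, hS, h2⟩

theorem ccLe_refl {Ar Al Abi : Set A} (p : Proc A) : ccLe Ar Al Abi p p := by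
  refine ⟨fun u v => u = v, ?_, rfl⟩
  intro u v huv; subst huv
  exact ⟨fun c _ p' hs => ⟨p', hs, rfl⟩, fun c _ q' hs => ⟨q', hs, rfl⟩⟩

theorem ccLe_trans {Ar Al Abi : Set A} {p q r : Proc A}
    (h1 : ccLe Ar Al Abi p q) (h2 : ccLe Ar Al Abi q r) : ccLe Ar Al Abi p r := by
  refine ⟨fun u v => ∃ w, ccLe Ar Al Abi u w ∧ ccLe Ar Al Abi w v, ?_, ⟨q, h1, h2⟩⟩
  rintro u v ⟨w, huw, hwv⟩
  constructor
  · intro c hc p' hs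
    obtain ⟨w', hw1, hw2⟩ := ccLe_stepL huw hc hs
    obtain ⟨v', hv1, hv2⟩ := ccLe_stepL hwv hc hw1
    exact ⟨v', hv1, w', hw2, hv2⟩
  · intro c hc v' hs
    obtain ⟨w', hw1, hw2⟩ := ccLe_stepR hwv hc hs
    obtain ⟨u', hu1, hu2⟩ := ccLe_stepR huw hc hw1
    exact ⟨u', hu1, w', hu2, hw2⟩

theorem ccLe_pre {Ar Al Abi : Set A} {p q : Proc A} (c : A)
    (h : ccLe Ar Al Abi p q) : ccLe Ar Al Abi (.pre c p) (.pre c q) := by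
  refine ⟨fun u v => (u = .pre c p ∧ v = .pre c q) ∨ ccLe Ar Al Abi u v, ?_,
    Or.inl ⟨rfl, rfl⟩⟩
  rintro u v (⟨rfl, rfl⟩ | huv)
  · constructor
    · intro c' hc' p' hs
      cases hs
      exact ⟨q, Step.pre c q, Or.inr h⟩
    · intro c' hc' q' hs
      cases hs
      exact ⟨p, Step.pre c p, Or.inr h⟩
  · constructor
    · intro c' hc' p' hs
      obtain ⟨q', h1, h2⟩ := ccLe_stepL huv hc' hs
      exact ⟨q', h1, Or.inr h2⟩
    · intro c' hc' q' hs
      obtain ⟨p', h1, h2⟩ := ccLe_stepR huv hc' hs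
      exact ⟨p', h1, Or.inr h2⟩

theorem ccLe_add_congr {Ar Al Abi : Set A} {p q r s : Proc A}
    (h1 : ccLe Ar Al Abi p q) (h2 : ccLe Ar Al Abi r s) :
    ccLe Ar Al Abi (.add p r) (.add q s) := by
  refine ⟨fun u v => (u = .add p r ∧ v = .add q s) ∨ ccLe Ar Al Abi u v, ?_,
    Or.inl ⟨rfl, rfl⟩⟩
  rintro u v (⟨rfl, rfl⟩ | huv)
  · constructor
    · intro c hc p' hs
      cases hs with
      | addL _ h0 =>
        obtain ⟨q', hq1, hq2⟩ := ccLe_stepL h1 hc h0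
        exact ⟨q', Step.addL _ hq1, Or.inr hq2⟩
      | addR _ h0 =>
        obtain ⟨q', hq1, hq2⟩ := ccLe_stepL h2 hc h0
        exact ⟨q', Step.addR _ hq1, Or.inr hq2⟩
    · intro c hc q' hs
      cases hs with
      | addL _ h0 =>
        obtain ⟨p', hp1, hp2⟩ := ccLe_stepR h1 hc h0
        exact ⟨p', Step.addL _ hp1, Or.inr hp2⟩
      | addR _ h0 =>
        obtain ⟨p', hp1, hp2⟩ := ccLe_stepR h2 hc h0
        exact ⟨p', Step.addR _ hp1, Or.inr hp2⟩
  · constructor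
    · intro c hc p' hs
      obtain ⟨q', hq1, hq2⟩ := ccLe_stepL huv hc hs
      exact ⟨q', hq1, Or.inr hq2⟩
    · intro c hc q' hs
      obtain ⟨p', hp1, hp2⟩ := ccLe_stepR huv hc hs
      exact ⟨p', hp1, Or.inr hp2⟩

theorem ccLe_add_le {Ar Al Abi : Set A} {p q r : Proc A}
    (h1 : ccLe Ar Al Abi p r) (h2 : ccLe Ar Al Abi q r) :
    ccLe Ar Al Abi (.add p q) r := by
  refine ⟨fun u v => (u = .add p q ∧ v = r) ∨ ccLe Ar Al Abi u v, ?_,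
    Or.inl ⟨rfl, rfl⟩⟩
  rintro u v (⟨rfl, rfl⟩ | huv)
  · constructor
    · intro c hc p' hs
      cases hs with
      | addL _ h0 =>
        obtain ⟨q', hq1, hq2⟩ := ccLe_stepL h1 hc h0
        exact ⟨q', hq1, Or.inr hq2⟩
      | addR _ h0 =>
        obtain ⟨q', hq1, hq2⟩ := ccLe_stepL h2 hc h0
        exact ⟨q', hq1, Or.inr hq2⟩
    · intro c hc q' hs
      obtain ⟨p', hp1, hp2⟩ := ccLe_stepR h1 hc hs
      exact ⟨p', Step.addL _ hp1, Or.inr hp2⟩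
  · constructor
    · intro c hc p' hs
      obtain ⟨q', hq1, hq2⟩ := ccLe_stepL huv hc hs
      exact ⟨q', hq1, Or.inr hq2⟩
    · intro c hc q' hs
      obtain ⟨p', hp1, hp2⟩ := ccLe_stepR huv hc hs
      exact ⟨p', hp1, Or.inr hp2⟩

theorem ccLe_le_add_silent {Ar Al Abi : Set A} {p q s : Proc A}
    (h1 : ccLe Ar Al Abi p q) (hsil : ∀ c ∈ Al ∪ Abi, ∀ d, ¬ Step s c d) :
    ccLe Ar Al Abi p (.add q s) := by
  refine ⟨fun u v => (u = p ∧ v = .add q s) ∨ ccLe Ar Al Abi u v, ?_,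
    Or.inl ⟨rfl, rfl⟩⟩
  rintro u v (⟨rfl, rfl⟩ | huv)
  · constructor
    · intro c hc p' hs
      obtain ⟨q', hq1, hq2⟩ := ccLe_stepL h1 hc hs
      exact ⟨q', Step.addL _ hq1, Or.inr hq2⟩
    · intro c hc q' hs
      cases hs with
      | addL _ h0 =>
        obtain ⟨p', hp1, hp2⟩ := ccLe_stepR h1 hc h0
        exact ⟨p', hp1, Or.inr hp2⟩
      | addR _ h0 => exact absurd h0 (hsil c hc q')
  · constructor
    · intro c hc p' hs
      obtain ⟨q', hq1, hq2⟩ := ccLe_stepL huv hc hs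
      exact ⟨q', hq1, Or.inr hq2⟩
    · intro c hc q' hs
      obtain ⟨p', hp1, hp2⟩ := ccLe_stepR huv hc hs
      exact ⟨p', hp1, Or.inr hp2⟩

theorem ccLe_swap {Ar Al Abi : Set A} {p q : Proc A}
    (h : ccLe Ar Al Abi p q) : ccLe Al Ar Abi q p := by
  obtain ⟨S, hS, hpq⟩ := h
  refine ⟨fun u v => S v u, ?_, hpq⟩
  intro u v huv
  constructor
  · intro c hc p' hs
    obtain ⟨q', h1, h2⟩ := (hS v u huv).2 c hc p' hs
    exact ⟨q', h1, h2⟩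
  · intro c hc q' hs
    obtain ⟨p', h1, h2⟩ := (hS v u huv).1 c hc q' hs
    exact ⟨p', h1, h2⟩

theorem ccEq_swap {Ar Al Abi : Set A} {p q : Proc A}
    (h : ccEq Ar Al Abi p q) : ccEq Al Ar Abi p q :=
  ⟨ccLe_swap h.2, ccLe_swap h.1⟩

theorem derivEq_sound {Ar Al Abi : Set A} {E : Set (Term A × Term A)}
    (hs : ∀ e ∈ E, ∀ σ : ℕ → Proc A, ccEq Ar Al Abi (e.1.subst σ) (e.2.subst σ))
    {p q : Proc A} (h : DerivEq E p q) : ccEq Ar Al Abi p q := by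
  induction h with
  | ax l r σ hmem => exact hs _ hmem σ
  | refl p => exact ⟨ccLe_refl p, ccLe_refl p⟩
  | symm _ ih => exact ⟨ih.2, ih.1⟩
  | trans _ _ ih1 ih2 => exact ⟨ccLe_trans ih1.1 ih2.1, ccLe_trans ih2.2 ih1.2⟩
  | pre c _ ih => exact ⟨ccLe_pre c ih.1, ccLe_pre c ih.2⟩
  | add _ _ ih1 ih2 => exact ⟨ccLe_add_congr ih1.1 ih2.1, ccLe_add_congr ih1.2 ih2.2⟩

end CCAux

section CCSyntax

variable {A : Type}

/-- `x` occurs as a top-level (summand) variable of a term. -/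
inductive TopV (x : ℕ) : Term A → Prop
  | var : TopV x (.var x)
  | addL {s t : Term A} : TopV x s → TopV x (.add s t)
  | addR {s t : Term A} : TopV x t → TopV x (.add s t)

/-- `pre c w` occurs as a top-level summand of a term. -/
inductive TopP (c : A) (w : Term A) : Term A → Prop
  | pre : TopP c w (.pre c w)
  | addL {s t : Term A} : TopP c w s → TopP c w (.add s t)
  | addR {s t : Term A} : TopP c w t → TopP c w (.add s t)

theorem step_of_topP {c : A} {w u : Term A} (h : TopP c w u) (σ : ℕ → Proc A) :
    Step (u.subst σ) c (w.subst σ) := by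
  induction h with
  | pre => exact Step.pre c _
  | addL _ ih => exact Step.addL _ ih
  | addR _ ih => exact Step.addR _ ih

theorem step_of_topV {σ : ℕ → Proc A} {x : ℕ} {u : Term A} (h : TopV x u) {c : A} {d : Proc A}
    (hs : Step (σ x) c d) : Step (u.subst σ) c d := by
  induction h with
  | var => exact hs
  | addL _ ih => exact Step.addL _ ih
  | addR _ ih => exact Step.addR _ ih

theorem step_subst_cases {σ : ℕ → Proc A} :
    ∀ {u : Term A} {c : A} {d : Proc A}, Step (u.subst σ) c d →
      (∃ w, TopP c w u ∧ d = w.subst σ) ∨ (∃ x, TopV x u ∧ Step (σ x) c d)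
  | .var x, c, d, h => Or.inr ⟨x, TopV.var, h⟩
  | .nil, _, _, h => nomatch h
  | .pre c' t, c, d, h => by
      cases h
      exact Or.inl ⟨t, TopP.pre, rfl⟩
  | .add s t, c, d, h => by
      cases h with
      | addL _ h0 =>
        rcases step_subst_cases h0 with ⟨w, hw, he⟩ | ⟨x, hx, h2⟩
        · exact Or.inl ⟨w, TopP.addL hw, he⟩
        · exact Or.inr ⟨x, TopV.addL hx, h2⟩
      | addR _ h0 =>
        rcases step_subst_cases h0 with ⟨w, hw, he⟩ | ⟨x, hx, h2⟩
        · exact Or.inl ⟨w, TopP.addR hw, he⟩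
        · exact Or.inr ⟨x, TopV.addR hx, h2⟩

/-- Depth of an open term. -/
def tdepth : Term A → ℕ
  | .var _ => 0
  | .nil => 0
  | .pre _ t => tdepth t + 1
  | .add s t => max (tdepth s) (tdepth t)

/-- Depth of a closed process. -/
def pdepth : Proc A → ℕ
  | .nil => 0
  | .pre _ p => pdepth p + 1
  | .add p q => max (pdepth p) (pdepth q)

theorem tdepth_topP {c : A} {w u : Term A} (h : TopP c w u) : tdepth w < tdepth u := by
  induction h with
  | pre => exact Nat.lt_succ_self _
  | addL _ ih => exact lt_of_lt_of_le ih (le_max_left _ _)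
  | addR _ ih => exact lt_of_lt_of_le ih (le_max_right _ _)

theorem step_pdepth {p : Proc A} {c : A} {q : Proc A} (h : Step p c q) :
    pdepth q < pdepth p := by
  induction h with
  | pre => exact Nat.lt_succ_self _
  | addL _ _ ih => exact lt_of_lt_of_le ih (le_max_left _ _)
  | addR _ _ ih => exact lt_of_lt_of_le ih (le_max_right _ _)

variable [DecidableEq A]

/-- Length of the longest initial `b`-path of a process. -/
def bdepth (b : A) : Proc A → ℕ
  | .nil => 0
  | .pre c p => if c = b then bdepth b p + 1 else 0
  | .add p q => max (bdepth b p) (bdepth b q)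

theorem bdepth_le_pdepth (b : A) : ∀ p : Proc A, bdepth b p ≤ pdepth p
  | .nil => le_refl _
  | .pre c p => by
      simp only [bdepth, pdepth]
      split
      · exact Nat.succ_le_succ (bdepth_le_pdepth b p)
      · exact Nat.zero_le _
  | .add p q => max_le_max (bdepth_le_pdepth b p) (bdepth_le_pdepth b q)

theorem step_b_bdepth {b : A} {p q : Proc A} (h : Step p b q) :
    bdepth b q < bdepth b p := by
  induction h with
  | pre =>
    simp only [bdepth, if_pos rfl]
    exact Nat.lt_succ_self _
  | addL _ _ ih => exact lt_of_lt_of_le ih (le_max_left _ _)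
  | addR _ _ ih => exact lt_of_lt_of_le ih (le_max_right _ _)

/-- Max `bdepth` of values substituted for the variables of a term. -/
def varB (b : A) (τ : ℕ → Proc A) : Term A → ℕ
  | .var y => bdepth b (τ y)
  | .nil => 0
  | .pre _ t => varB b τ t
  | .add s t => max (varB b τ s) (varB b τ t)

theorem bdepth_subst (b : A) (τ : ℕ → Proc A) :
    ∀ v : Term A, bdepth b (v.subst τ) ≤ tdepth v + varB b τ v
  | .var y => by simp [Term.subst, tdepth, varB]
  | .nil => by simp [Term.subst, bdepth, tdepth, varB]
  | .pre c t => by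
      show bdepth b (.pre c (t.subst τ)) ≤ (tdepth t + 1) + varB b τ t
      simp only [bdepth]
      split
      · have := bdepth_subst b τ t; omega
      · exact Nat.zero_le _
  | .add s t => by
      show max (bdepth b (s.subst τ)) (bdepth b (t.subst τ)) ≤
        max (tdepth s) (tdepth t) + max (varB b τ s) (varB b τ t)
      have h1 := bdepth_subst b τ s
      have h2 := bdepth_subst b τ t
      have h3 := le_max_left (tdepth s) (tdepth t)
      have h4 := le_max_right (tdepth s) (tdepth t)
      have h5 := le_max_left (varB b τ s) (varB b τ t)
      have h6 := le_max_right (varB b τ s) (varB b τ t)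
      exact max_le (by omega) (by omega)

theorem varB_update (b : A) (σ : ℕ → Proc A) (x : ℕ) (P : Proc A)
    (hP : bdepth b P = bdepth b (σ x)) :
    ∀ v : Term A, varB b (Function.update σ x P) v = varB b σ v
  | .var y => by
      by_cases hy : y = x
      · subst hy; simp [varB, Function.update_self, hP]
      · simp [varB, Function.update_of_ne hy]
  | .nil => rfl
  | .pre c t => varB_update b σ x P hP t
  | .add s t => by
      show max _ _ = max _ _
      rw [varB_update b σ x P hP s, varB_update b σ x P hP t]

theorem varB_topP (b : A) (τ : ℕ → Proc A) {c : A} {w u : Term A} (h : TopP c w u) :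
    varB b τ w ≤ varB b τ u := by
  induction h with
  | pre => exact le_refl _
  | addL _ ih => exact le_trans ih (le_max_left _ _)
  | addR _ ih => exact le_trans ih (le_max_right _ _)

end CCSyntax

section CCPaths

variable {A : Type}

/-- `BPath b s p q`: there is a path of `s` many `b`-steps from `p` to `q`. -/
def BPath (b : A) : ℕ → Proc A → Proc A → Prop
  | 0, p, q => p = q
  | s + 1, p, q => ∃ r, Step p b r ∧ BPath b s r q

theorem BPath_comp {b : A} :
    ∀ {i j : ℕ} {p q r : Proc A}, BPath b i p q → BPath b j q r → BPath b (i + j) p r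
  | 0, j, p, q, r, h1, h2 => by
      have : p = q := h1
      subst this
      simpa [Nat.zero_add] using h2
  | i + 1, j, p, q, r, h1, h2 => by
      obtain ⟨m, hm, hp⟩ := h1
      have : i + 1 + j = (i + j) + 1 := by omega
      rw [this]
      exact ⟨m, hm, BPath_comp hp h2⟩

/-- A chain of `k` syntactic `b`-prefix unfoldings inside a term. -/
inductive BChain (b : A) : Term A → ℕ → Term A → Prop
  | refl (w : Term A) : BChain b w 0 w
  | step {w w₁ : Term A} {k : ℕ} {w' : Term A} :
      TopP b w₁ w → BChain b w₁ k w' → BChain b w (k + 1) w'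

theorem BChain_depth {b : A} {w : Term A} {k : ℕ} {w' : Term A}
    (h : BChain b w k w') : k + tdepth w' ≤ tdepth w := by
  induction h with
  | refl w => omega
  | step hT _ ih =>
    have := tdepth_topP hT
    omega

theorem BPath_of_BChain {b : A} {w : Term A} {k : ℕ} {w' : Term A}
    (h : BChain b w k w') (σ : ℕ → Proc A) :
    BPath b k (w.subst σ) (w'.subst σ) := by
  induction h with
  | refl w => rfl
  | step hT _ ih => exact ⟨_, step_of_topP hT σ, ih⟩

theorem bpath_subst_decompose {b : A} {σ : ℕ → Proc A} :
    ∀ {s : ℕ} {w : Term A} {h : Proc A}, BPath b s (w.subst σ) h →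
      (∃ w', BChain b w s w' ∧ h = w'.subst σ) ∨
      (∃ j wj x i, BChain b w j wj ∧ TopV x wj ∧ 1 ≤ i ∧ j + i = s ∧ BPath b i (σ x) h)
  | 0, w, h, hp => Or.inl ⟨w, BChain.refl w, hp.symm⟩
  | s + 1, w, h, hp => by
      obtain ⟨r, hst, hrest⟩ := hp
      rcases step_subst_cases hst with ⟨w₁, hT, rfl⟩ | ⟨x, hx, hsx⟩
      · rcases bpath_subst_decompose hrest with ⟨w', hch, he⟩ | ⟨j, wj, x, i, hch, hxv, hi, hji, hpx⟩
        · exact Or.inl ⟨w', BChain.step hT hch, he⟩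
        · refine Or.inr ⟨j + 1, wj, x, i, BChain.step hT hch, hxv, hi, by omega, hpx⟩
      · exact Or.inr ⟨0, w, x, s + 1, BChain.refl w, hx, by omega, by omega, ⟨r, hsx, hrest⟩⟩

end CCPaths

section CCG

variable {A : Type}

/-- The key invariant: `GG Abi a b m d` says that every maximal `b`-path of `d`
has length exactly `m`, no bivariant action other than `b` is on offer along it,
and at its end the action `a` is on offer. -/
def GG (Abi : Set A) (a b : A) : ℕ → Proc A → Prop
  | 0, d => (∀ c ∈ Abi, ∀ d', ¬ Step d c d') ∧ (∃ d', Step d a d')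
  | m + 1, d => (∃ d', Step d b d') ∧ (∀ c ∈ Abi, ∀ d', Step d c d' → c = b) ∧
      (∀ d', Step d b d' → GG Abi a b m d')

theorem GG_bpath {Abi : Set A} {a b : A} (hb : b ∈ Abi) :
    ∀ {s m : ℕ} {g h : Proc A}, GG Abi a b m g → BPath b s g h →
      s ≤ m ∧ GG Abi a b (m - s) h
  | 0, m, g, h, hG, hp => by
      have : g = h := hp
      subst this
      simpa using hG
  | s + 1, m, g, h, hG, hp => by
      obtain ⟨r, hst, hrest⟩ := hp
      cases m with
      | zero => exact absurd hst (hG.1 b hb r)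
      | succ m =>
        have hGr : GG Abi a b m r := hG.2.2 r hst
        obtain ⟨h1, h2⟩ := GG_bpath hb hGr hrest
        exact ⟨by omega, by simpa [Nat.succ_sub_succ] using h2⟩

end CCG

section CCGLemmas

variable {A : Type} {Ar Al Abi : Set A} {a b : A}

theorem ccLe_bpath (hbR : b ∈ Ar ∪ Abi) :
    ∀ {s : ℕ} {g e h : Proc A}, ccLe Ar Al Abi g e → BPath b s g h →
      ∃ e', BPath b s e e' ∧ ccLe Ar Al Abi h e'
  | 0, g, e, h, hle, hp => by
      have : g = h := hp
      subst this
      exact ⟨e, rfl, hle⟩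
  | s + 1, g, e, h, hle, hp => by
      obtain ⟨r, hst, hrest⟩ := hp
      obtain ⟨e₁, he₁, hle₁⟩ := ccLe_stepL hle hbR hst
      obtain ⟨e', hpe, hles⟩ := ccLe_bpath hbR hle₁ hrest
      exact ⟨e', ⟨e₁, he₁, hpe⟩, hles⟩

theorem GG_of_path :
    ∀ (m : ℕ) (g : Proc A),
      (∀ s h, BPath b s g h →
        (s < m → (∃ h', Step h b h') ∧ (∀ c ∈ Abi, ∀ h', Step h c h' → c = b)) ∧
        (s = m → (∀ c ∈ Abi, ∀ h', ¬ Step h c h') ∧ (∃ h', Step h a h'))) →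
      GG Abi a b m g
  | 0, g, H => ⟨((H 0 g rfl).2 rfl).1, ((H 0 g rfl).2 rfl).2⟩
  | m + 1, g, H => by
      refine ⟨((H 0 g rfl).1 (Nat.succ_pos m)).1, ((H 0 g rfl).1 (Nat.succ_pos m)).2, ?_⟩
      intro g' hg'
      refine GG_of_path m g' (fun s h hp => ?_)
      have hH := H (s + 1) h ⟨g', hg', hp⟩
      exact ⟨fun hlt => hH.1 (by omega), fun he => hH.2 (by omega)⟩

theorem GG_sandwich (haR : a ∈ Ar ∪ Abi) (hb : b ∈ Abi) :
    ∀ {m : ℕ} {d g e : Proc A}, ccLe Ar Al Abi d g → ccLe Ar Al Abi g e →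
      GG Abi a b m d → GG Abi a b m e → GG Abi a b m g
  | 0, d, g, e, hdg, hge, hGd, hGe => by
      constructor
      · intro c hc g' hs
        obtain ⟨e', he', _⟩ := ccLe_stepL hge (Set.mem_union_right _ hc) hs
        exact hGe.1 c hc e' he'
      · obtain ⟨d', hd'⟩ := hGd.2
        obtain ⟨g', hg', _⟩ := ccLe_stepL hdg haR hd'
        exact ⟨g', hg'⟩
  | m + 1, d, g, e, hdg, hge, hGd, hGe => by
      refine ⟨?_, ?_, ?_⟩
      · obtain ⟨d', hd'⟩ := hGd.1
        obtain ⟨g', hg', _⟩ := ccLe_stepL hdg (Set.mem_union_right _ hb) hd'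
        exact ⟨g', hg'⟩
      · intro c hc g' hs
        obtain ⟨e', he', _⟩ := ccLe_stepL hge (Set.mem_union_right _ hc) hs
        exact hGe.2.1 c hc e' he'
      · intro g' hs
        obtain ⟨d', hd', hdg'⟩ := ccLe_stepR hdg (Set.mem_union_right _ hb) hs
        obtain ⟨e', he', hge'⟩ := ccLe_stepL hge (Set.mem_union_right _ hb) hs
        exact GG_sandwich haR hb hdg' hge' (hGd.2.2 d' hd') (hGe.2.2 e' he')

end CCGLemmas

section CCExtract

variable {A : Type} {Ar Al Abi : Set A} {a b : A}

theorem probe_step_up {σ : ℕ → Proc A} {x : ℕ} {v : Term A} {c : A} {d : Proc A}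
    (h : Step (v.subst σ) c d) :
    ∃ d', Step (v.subst (Function.update σ x (.add (σ x) (.pre b .nil)))) c d' := by
  rcases step_subst_cases h with ⟨w, hw, rfl⟩ | ⟨y, hy, hsy⟩
  · exact ⟨_, step_of_topP hw _⟩
  · by_cases hyx : y = x
    · subst hyx
      refine ⟨d, step_of_topV hy ?_⟩
      rw [Function.update_self]
      exact Step.addL _ hsy
    · exact ⟨d, step_of_topV hy (by rw [Function.update_of_ne hyx]; exact hsy)⟩

theorem probe_step_down {σ : ℕ → Proc A} {x : ℕ} {v : Term A} {c : A} {d : Proc A}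
    (h : Step (v.subst (Function.update σ x (.add (σ x) (.pre b .nil)))) c d) :
    (∃ d', Step (v.subst σ) c d') ∨ (c = b ∧ TopV x v) := by
  rcases step_subst_cases h with ⟨w, hw, rfl⟩ | ⟨y, hy, hsy⟩
  · exact Or.inl ⟨_, step_of_topP hw σ⟩
  · by_cases hyx : y = x
    · subst hyx
      rw [Function.update_self] at hsy
      cases hsy with
      | addL _ h0 => exact Or.inl ⟨d, step_of_topV hy h0⟩
      | addR _ h0 =>
        cases h0
        exact Or.inr ⟨rfl, hy⟩
    · rw [Function.update_of_ne hyx] at hsy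
      exact Or.inl ⟨d, step_of_topV hy hsy⟩

theorem extract (hb : b ∈ Abi) (σ : ℕ → Proc A) (x : ℕ) :
    ∀ (m : ℕ) (v : Term A), GG Abi a b m (v.subst σ) →
      ¬ GG Abi a b m (v.subst (Function.update σ x (.add (σ x) (.pre b .nil)))) →
      ∃ k v', k ≤ m ∧ BChain b v k v' ∧ TopV x v' := by
  intro m
  induction m with
  | zero =>
    intro v hG hnG
    by_cases hx : TopV x v
    · exact ⟨0, v, le_refl 0, BChain.refl v, hx⟩
    · exfalso
      apply hnG
      constructor
      · intro c hc d' hs'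
        rcases probe_step_down hs' with ⟨d'', h''⟩ | ⟨rfl, hx'⟩
        · exact hG.1 c hc d'' h''
        · exact hx hx'
      · obtain ⟨d, hd⟩ := hG.2
        exact probe_step_up hd
  | succ m ih =>
    intro v hG hnG
    by_cases hx : TopV x v
    · exact ⟨0, v, Nat.zero_le _, BChain.refl v, hx⟩
    · have h1 : ∃ d', Step (v.subst (Function.update σ x (.add (σ x) (.pre b .nil)))) b d' := by
        obtain ⟨d0, hd0⟩ := hG.1
        exact probe_step_up hd0
      have h2 : ∀ c ∈ Abi, ∀ d',
          Step (v.subst (Function.update σ x (.add (σ x) (.pre b .nil)))) c d' → c = b := by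
        intro c hc d' hs'
        rcases probe_step_down hs' with ⟨d'', h''⟩ | ⟨hcb, _⟩
        · exact hG.2.1 c hc d'' h''
        · exact hcb
      have h3 : ¬ ∀ d', Step (v.subst (Function.update σ x (.add (σ x) (.pre b .nil)))) b d' →
          GG Abi a b m d' := fun hall => hnG ⟨h1, h2, hall⟩
      push_neg at h3
      obtain ⟨d', hs', hnG'⟩ := h3
      rcases step_subst_cases hs' with ⟨w₁, hT, rfl⟩ | ⟨y, hy, hsy⟩
      · have hGw : GG Abi a b m (w₁.subst σ) := hG.2.2 _ (step_of_topP hT σ)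
        obtain ⟨k, v', hk, hch, hxv⟩ := ih w₁ hGw hnG'
        exact ⟨k + 1, v', Nat.succ_le_succ hk, BChain.step hT hch, hxv⟩
      · by_cases hyx : y = x
        · exact absurd (hyx ▸ hy) hx
        · rw [Function.update_of_ne hyx] at hsy
          exact absurd (hG.2.2 _ (step_of_topV hy hsy)) hnG'

end CCExtract

section CCWitness

variable {A : Type} {Ar Al Abi : Set A} {a b : A}

/-- `Bp a b n = bⁿ.a.0`. -/
def Bp (a b : A) : ℕ → Proc A
  | 0 => .pre a .nil
  | n + 1 => .pre b (Bp a b n)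

/-- `Cp b n = bⁿ.0`. -/
def Cp (b : A) : ℕ → Proc A
  | 0 => .nil
  | n + 1 => .pre b (Cp b n)

theorem GG_Bp (haAbi : a ∉ Abi) : ∀ n, GG Abi a b n (Bp a b n)
  | 0 => by
      constructor
      · intro c hc d' hs
        cases hs
        exact haAbi hc
      · exact ⟨Proc.nil, Step.pre a Proc.nil⟩
  | n + 1 => by
      refine ⟨⟨Bp a b n, Step.pre b _⟩, ?_, ?_⟩
      · intro c hc d' hs
        cases hs
        rfl
      · intro d' hs
        cases hs
        exact GG_Bp haAbi n

theorem BPath_Cp : ∀ n, BPath b n (Cp b n) Proc.nil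
  | 0 => rfl
  | n + 1 => ⟨Cp b n, Step.pre b _, BPath_Cp n⟩

theorem Cp_le_Bp (haAl : a ∉ Al) (haAbi : a ∉ Abi) :
    ∀ n, ccLe Ar Al Abi (Cp b n) (Bp a b n)
  | 0 => by
      refine ⟨fun u v => u = Proc.nil ∧ v = .pre a .nil, ?_, rfl, rfl⟩
      rintro u v ⟨rfl, rfl⟩
      constructor
      · intro c hc p' hs
        cases hs
      · intro c hc q' hs
        cases hs
        rcases hc with h | h
        · exact absurd h haAl
        · exact absurd h haAbi
  | n + 1 => ccLe_pre b (Cp_le_Bp haAl haAbi n)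

theorem Cp_le_bdepth [DecidableEq A] (hbR : b ∈ Ar ∪ Abi) :
    ∀ {N : ℕ} {e : Proc A}, ccLe Ar Al Abi (Cp b N) e → N ≤ bdepth b e
  | 0, e, _ => Nat.zero_le _
  | N + 1, e, h => by
      obtain ⟨e', he', hle⟩ := ccLe_stepL h hbR (Step.pre b (Cp b N))
      have h1 := Cp_le_bdepth hbR hle
      have h2 := step_b_bdepth he'
      omega

end CCWitness

section CCCrux

variable {A : Type}

theorem crux [DecidableEq A] {Ar Al Abi : Set A} {a b : A}
    (ha : a ∈ Ar) (hb : b ∈ Abi) (haAl : a ∉ Al) (haAbi : a ∉ Abi)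
    {n : ℕ} (t u : Term A)
    (hsound : ∀ σ' : ℕ → Proc A, ccEq Ar Al Abi (t.subst σ') (u.subst σ'))
    (hdt : tdepth t + 2 ≤ n) (hdu : tdepth u + 2 ≤ n)
    (σ : ℕ → Proc A)
    (hΦ : ∀ d, Step (t.subst σ) a d → GG Abi a b n d) :
    ∀ d, Step (u.subst σ) a d → GG Abi a b n d := by
  have haR : a ∈ Ar ∪ Abi := Set.mem_union_left _ ha
  have hbR : b ∈ Ar ∪ Abi := Set.mem_union_right _ hb
  have hbL : b ∈ Al ∪ Abi := Set.mem_union_right _ hb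
  have hab : a ≠ b := fun h => haAbi (h ▸ hb)
  intro d hd
  rcases step_subst_cases hd with ⟨w, hw, rfl⟩ | ⟨x, hxu, hxstep⟩
  · -- Case 2: `d` comes from a rigid summand `a.w` of `u`.
    obtain ⟨e, he, hwe⟩ := ccLe_stepL (hsound σ).2 haR (step_of_topP hw σ)
    have hGe : GG Abi a b n e := hΦ e he
    refine GG_of_path n _ (fun s h hp => ?_)
    obtain ⟨es, hpe, hhe⟩ := ccLe_bpath hbR hwe hp
    obtain ⟨hsn, hGes⟩ := GG_bpath hb hGe hpe
    constructor
    · intro hlt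
      obtain ⟨m', hm'⟩ : ∃ m', n - s = m' + 1 := ⟨n - s - 1, by omega⟩
      rw [hm'] at hGes
      constructor
      · obtain ⟨e', he'⟩ := hGes.1
        obtain ⟨h', hh', _⟩ := ccLe_stepR hhe hbL he'
        exact ⟨h', hh'⟩
      · intro c hc h' hsh
        obtain ⟨e'', he'', _⟩ := ccLe_stepL hhe (Set.mem_union_right _ hc) hsh
        exact hGes.2.1 c hc e'' he''
    · intro hseq
      rw [hseq] at hp hGes
      rw [Nat.sub_self] at hGes
      have hsilh : ∀ c ∈ Abi, ∀ h', ¬ Step h c h' := by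
        intro c hc h' hsh
        obtain ⟨e'', he'', _⟩ := ccLe_stepL hhe (Set.mem_union_right _ hc) hsh
        exact hGes.1 c hc e'' he''
      refine ⟨hsilh, ?_⟩
      rcases bpath_subst_decompose hp with ⟨w', hch, he'⟩ | ⟨j, wj, x, i, hch, hxwj, hi1, hji, hpx⟩
      · exfalso
        have h1 := BChain_depth hch
        have h2 := tdepth_topP hw
        omega
      · have hju : j ≤ tdepth w := by have := BChain_depth hch; omega
        have hjn : j + 2 ≤ n := by have := tdepth_topP hw; omega
        obtain ⟨e', he', hwe'⟩ :=
          ccLe_stepL (hsound (Function.update σ x (.add (σ x) (.pre b .nil)))).2 haR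
            (step_of_topP hw _)
        have hdead : BPath b (j + 1)
            (w.subst (Function.update σ x (.add (σ x) (.pre b .nil)))) Proc.nil := by
          refine BPath_comp (BPath_of_BChain hch _) ?_
          refine ⟨Proc.nil, step_of_topV hxwj ?_, rfl⟩
          rw [Function.update_self]
          exact Step.addR _ (Step.pre b Proc.nil)
        have hnGe' : ¬ GG Abi a b n e' := by
          intro hGG
          obtain ⟨f, hpf, hnilf⟩ := ccLe_bpath hbR hwe' hdead
          obtain ⟨hle, hGf⟩ := GG_bpath hb hGG hpf
          obtain ⟨m'', hm''⟩ : ∃ m'', n - (j + 1) = m'' + 1 := ⟨n - (j + 1) - 1, by omega⟩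
          rw [hm''] at hGf
          obtain ⟨f', hf'⟩ := hGf.1
          obtain ⟨z, hz, _⟩ := ccLe_stepR hnilf hbL hf'
          cases hz
        rcases step_subst_cases he' with ⟨v, hv, rfl⟩ | ⟨y, hyt, hys⟩
        · have hGv : GG Abi a b n (v.subst σ) := hΦ _ (step_of_topP hv σ)
          obtain ⟨k, v'', hkn, hchv, hxv''⟩ := extract hb σ x n v hGv hnGe'
          have hpath : BPath b (k + i) (v.subst σ) h := by
            obtain ⟨i₀, rfl⟩ : ∃ i₀, i = i₀ + 1 := ⟨i - 1, by omega⟩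
            obtain ⟨mid, hmid, hrest⟩ := hpx
            exact BPath_comp (BPath_of_BChain hchv σ) ⟨mid, step_of_topV hxv'' hmid, hrest⟩
          obtain ⟨hkin, hGh⟩ := GG_bpath hb hGv hpath
          by_cases hcase : k + i = n
          · rw [hcase, Nat.sub_self] at hGh
            exact hGh.2
          · exfalso
            obtain ⟨m₃, hm₃⟩ : ∃ m₃, n - (k + i) = m₃ + 1 := ⟨n - (k + i) - 1, by omega⟩
            rw [hm₃] at hGh
            obtain ⟨h', hh'⟩ := hGh.1
            exact hsilh b hb h' hh'
        · exfalso
          by_cases hyx : y = x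
          · subst hyx
            rw [Function.update_self] at hys
            cases hys with
            | addL _ h0 => exact hnGe' (hΦ _ (step_of_topV hyt h0))
            | addR _ h0 =>
              cases h0
              exact hab rfl
          · rw [Function.update_of_ne hyx] at hys
            exact hnGe' (hΦ _ (step_of_topV hyt hys))
  · -- Case 1: `d` comes from a top-level variable of `u`.
    by_cases hxt : TopV x t
    · exact hΦ d (step_of_topV hxt hxstep)
    · exfalso
      set N := max (tdepth t + varB b σ t) (pdepth (t.subst σ)) + 1 with hN
      have hstep : Step (u.subst (Function.update σ x (.add (.pre a (Cp b N)) (σ x)))) a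
          (Cp b N) := by
        refine step_of_topV hxu ?_
        rw [Function.update_self]
        exact Step.addL _ (Step.pre a _)
      obtain ⟨e, he, hce⟩ :=
        ccLe_stepL (hsound (Function.update σ x (.add (.pre a (Cp b N)) (σ x)))).2 haR hstep
      have hNe : N ≤ bdepth b e := Cp_le_bdepth hbR hce
      rcases step_subst_cases he with ⟨v, hv, rfl⟩ | ⟨y, hyt, hys⟩
      · have h1 := bdepth_subst b (Function.update σ x (.add (.pre a (Cp b N)) (σ x))) v
        have h2 : varB b (Function.update σ x (.add (.pre a (Cp b N)) (σ x))) v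
            = varB b σ v := by
          refine varB_update b σ x _ ?_ v
          show bdepth b (.add (.pre a (Cp b N)) (σ x)) = bdepth b (σ x)
          simp [bdepth, if_neg hab]
        rw [h2] at h1
        have h3 := tdepth_topP hv
        have h4 := varB_topP b σ hv
        have h7 : tdepth t + varB b σ t < N := by
          have := le_max_left (tdepth t + varB b σ t) (pdepth (t.subst σ))
          omega
        omega
      · have hyx : y ≠ x := fun hEq => hxt (hEq ▸ hyt)
        rw [Function.update_of_ne hyx] at hys
        have h5 : pdepth e < pdepth (t.subst σ) := step_pdepth (step_of_topV hyt hys)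
        have h6 : bdepth b e ≤ pdepth e := bdepth_le_pdepth b e
        have h8 : pdepth (t.subst σ) < N := by
          have := le_max_right (tdepth t + varB b σ t) (pdepth (t.subst σ))
          omega
        omega

end CCCrux

section CCMain

theorem phi_iff {A : Type} [DecidableEq A] {Ar Al Abi : Set A} {a b : A}
    (ha : a ∈ Ar) (hb : b ∈ Abi) (haAl : a ∉ Al) (haAbi : a ∉ Abi)
    {n : ℕ} {E : Set (Term A × Term A)}
    (hEs : ∀ e ∈ E, ∀ σ : ℕ → Proc A, ccEq Ar Al Abi (e.1.subst σ) (e.2.subst σ))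
    (hEd : ∀ e ∈ E, tdepth e.1 + 2 ≤ n ∧ tdepth e.2 + 2 ≤ n)
    {p q : Proc A} (h : DerivEq E p q) :
    (∀ d, Step p a d → GG Abi a b n d) ↔ (∀ d, Step q a d → GG Abi a b n d) := by
  have haR : a ∈ Ar ∪ Abi := Set.mem_union_left _ ha
  induction h with
  | ax l r σ hmem =>
    constructor
    · exact crux ha hb haAl haAbi l r (fun σ' => hEs _ hmem σ') (hEd _ hmem).1
        (hEd _ hmem).2 σ
    · exact crux ha hb haAl haAbi r l (fun σ' => ⟨(hEs _ hmem σ').2, (hEs _ hmem σ').1⟩)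
        (hEd _ hmem).2 (hEd _ hmem).1 σ
  | refl p => exact Iff.rfl
  | symm _ ih => exact ih.symm
  | trans _ _ ih1 ih2 => exact ih1.trans ih2
  | pre c hder ih =>
    rename_i p' q'
    have hcc : ccEq Ar Al Abi p' q' := derivEq_sound hEs hder
    constructor
    · intro hΦ d hd
      cases hd
      exact GG_sandwich haR hb hcc.1 hcc.2 (hΦ _ (Step.pre _ _)) (hΦ _ (Step.pre _ _))
    · intro hΦ d hd
      cases hd
      exact GG_sandwich haR hb hcc.2 hcc.1 (hΦ _ (Step.pre _ _)) (hΦ _ (Step.pre _ _))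
  | add hder1 hder2 ih1 ih2 =>
    constructor
    · intro hΦ d hd
      cases hd with
      | addL _ h0 => exact ih1.mp (fun d' hd' => hΦ d' (Step.addL _ hd')) d h0
      | addR _ h0 => exact ih2.mp (fun d' hd' => hΦ d' (Step.addR _ hd')) d h0
    · intro hΦ d hd
      cases hd with
      | addL _ h0 => exact ih1.mpr (fun d' hd' => hΦ d' (Step.addL _ hd')) d h0
      | addR _ h0 => exact ih2.mpr (fun d' hd' => hΦ d' (Step.addR _ hd')) d h0

theorem cc_main_lemma {A : Type} (Ar Al Abi : Set A) (a b : A)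
    (ha : a ∈ Ar) (hb : b ∈ Abi) (haAl : a ∉ Al) (haAbi : a ∉ Abi)
    (E : Set (Term A × Term A)) (hfin : E.Finite)
    (hsound : ∀ e ∈ E, ∀ σ : ℕ → Proc A, ccEq Ar Al Abi (e.1.subst σ) (e.2.subst σ)) :
    ∃ p q : Proc A, ccEq Ar Al Abi p q ∧ ¬ DerivEq E p q := by
  classical
  set n := hfin.toFinset.sup (fun e => max (tdepth e.1) (tdepth e.2)) + 2 with hn
  have hEd : ∀ e ∈ E, tdepth e.1 + 2 ≤ n ∧ tdepth e.2 + 2 ≤ n := by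
    intro e he
    have h1 := Finset.le_sup (f := fun e : Term A × Term A => max (tdepth e.1) (tdepth e.2))
      (hfin.mem_toFinset.mpr he)
    have h2 := le_max_left (tdepth e.1) (tdepth e.2)
    have h3 := le_max_right (tdepth e.1) (tdepth e.2)
    omega
  refine ⟨.pre a (Bp a b n), .add (.pre a (Bp a b n)) (.pre a (Cp b n)), ⟨?_, ?_⟩, ?_⟩
  · refine ccLe_le_add_silent (ccLe_refl _) ?_
    intro c hc d hs
    cases hs
    rcases hc with h | h
    · exact haAl h
    · exact haAbi h
  · exact ccLe_add_le (ccLe_refl _) (ccLe_pre a (Cp_le_Bp haAl haAbi n))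
  · intro hder
    have hiff := phi_iff ha hb haAl haAbi hsound hEd hder
    have hΦp : ∀ d, Step (Proc.pre a (Bp a b n)) a d → GG Abi a b n d := by
      intro d hd
      cases hd
      exact GG_Bp haAbi n
    have hΦq := hiff.mp hΦp
    have hstep : Step (Proc.add (.pre a (Bp a b n)) (.pre a (Cp b n))) a (Cp b n) :=
      Step.addR _ (Step.pre a _)
    have hGC := hΦq _ hstep
    obtain ⟨_, hG0⟩ := GG_bpath hb hGC (BPath_Cp n)
    rw [Nat.sub_self] at hG0
    obtain ⟨d', hd'⟩ := hG0.2
    cases hd'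

end CCMain


/-- If `A^bi ≠ ∅` and `A^r ∪ A^l ≠ ∅`, then covariant-contravariant simulation
equivalence is not finitely axiomatizable: for every finite set `E` of
equations between open terms that is sound for `≡_CC`, there are processes
`p ≡_CC q` whose equation is not derivable from `E`. -/
theorem cc_eq_not_finitely_axiomatizable {A : Type} (Ar Al Abi : Set A)
    (hpart : IsPartition Ar Al Abi)
    (hbi : Abi.Nonempty) (hrl : (Ar ∪ Al).Nonempty)
    (E : Set (Term A × Term A)) (hfin : E.Finite)
    (hsound : ∀ e ∈ E, ∀ σ : ℕ → Proc A, ccEq Ar Al Abi (e.1.subst σ) (e.2.subst σ)) :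
    ∃ p q : Proc A, ccEq Ar Al Abi p q ∧ ¬ DerivEq E p q := by
  obtain ⟨b, hb⟩ := hbi
  obtain ⟨huniv, hd1, hd2, hd3⟩ := hpart
  obtain ⟨a, haRL⟩ := hrl
  rcases haRL with ha | ha
  · exact cc_main_lemma Ar Al Abi a b ha hb (Set.disjoint_left.mp hd1 ha)
      (Set.disjoint_left.mp hd2 ha) E hfin hsound
  · obtain ⟨p, q, hpq, hder⟩ := cc_main_lemma Al Ar Abi a b ha hb
      (Set.disjoint_right.mp hd1 ha) (Set.disjoint_left.mp hd3 ha) E hfin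
      (fun e he σ => ccEq_swap (hsound e he σ))
    exact ⟨p, q, ccEq_swap hpq, hder⟩
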